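/- Let w = Σ_{n≥1} n^{n−1} T^n/n! ∈ ℚ⟦T⟧ be the tree function. Then w satisfies the functional equation T·exp(w) = w in ℚ⟦T⟧, where exp(w) denotes substitution of the constant-term-zero series w into the exponential series Σ_{k≥0} X^k/k!. -/

import Mathlib

open Finset Polynomial fwdDiff

private lemma fd_eval (p : ℚ[X]) :
    fwdDiff (1:ℚ) (fun y => p.eval y) = fun y => (p.comp (X + C 1) - p).eval y := by
  funext y
  simp [fwdDiff, eval_comp]

private lemma fd_poly_zero : ∀ (m : ℕ) (p : ℚ[X]), p.natDegree < m →
    (fwdDiff (1:ℚ))^[m] (fun y => p.eval y) = fun _ => 0 := by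
  intro m
  induction m with
  | zero => intro p h; exact absurd h (Nat.not_lt_zero _)
  | succ m ih =>
    intro p hp
    rw [Function.iterate_succ_apply, fd_eval]
    by_cases h0 : p.natDegree = 0
    · obtain ⟨c, rfl⟩ := natDegree_eq_zero.mp h0
      have : (C c).comp (X + C 1) - C c = 0 := by simp
      rw [this]
      have hz : fwdDiff (1:ℚ) (fun y : ℚ => eval y (0:ℚ[X])) = fun y : ℚ => eval y (0:ℚ[X]) := by
        funext y; simp [fwdDiff]
      rw [Function.iterate_fixed hz m]
      funext y; simp
    · apply ih
      have hp0 : p ≠ 0 := fun h => h0 (by simp [h])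
      have hq : (X + C (1:ℚ)).natDegree = 1 := natDegree_X_add_C 1
      have hndeg : (p.comp (X + C 1)).natDegree = p.natDegree := by
        rw [natDegree_comp, hq, mul_one]
      have hlc : (p.comp (X + C 1)).leadingCoeff = p.leadingCoeff := by
        rw [leadingCoeff_comp (by rw [hq]; exact one_ne_zero), leadingCoeff_X_add_C, one_pow,
          mul_one]
      have hcomp0 : p.comp (X + C 1) ≠ 0 := by
        intro h
        apply hp0
        have := hlc
        rw [h, leadingCoeff_zero] at this
        exact leadingCoeff_eq_zero.mp this.symm
      have hdeg : (p.comp (X + C 1)).degree = p.degree := by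
        rw [degree_eq_natDegree hcomp0, degree_eq_natDegree hp0, hndeg]
      have hlt : (p.comp (X + C 1) - p).degree < p.degree := hdeg ▸ degree_sub_lt hdeg hcomp0 hlc
      rcases eq_or_ne (p.comp (X + C 1) - p) 0 with h | h
      · rw [h]; simpa using Nat.pos_of_ne_zero h0 |>.trans_le (Nat.lt_succ_iff.mp hp)
      · exact (natDegree_lt_natDegree h hlt).trans_le (Nat.lt_succ_iff.mp hp)

private lemma alt_sum_zero {m n : ℕ} (h : n < m) :
    ∑ k ∈ range (m + 1), (-1:ℚ) ^ (m - k) * (m.choose k) * ((k:ℚ) + 1) ^ n = 0 := by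
  have hdeg : ((X + C (1:ℚ)) ^ n).natDegree < m := by
    rw [natDegree_pow, natDegree_X_add_C, mul_one]; exact h
  have h0 := congrFun (fd_poly_zero m ((X + C (1:ℚ)) ^ n) hdeg) 0
  rw [fwdDiff_iter_eq_sum_shift] at h0
  rw [← h0]
  apply Finset.sum_congr rfl
  intro k hk
  have : ((0:ℚ) + k • (1:ℚ)) = (k:ℚ) := by simp
  rw [this]
  push_cast [eval_pow, zsmul_eq_mul, eval_add, eval_X, eval_C]
  ring

private lemma choose_id (n k : ℕ) : (n + 1 - k) * (n + 1).choose k = (n + 1) * n.choose k := by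
  rw [mul_comm, ← Nat.choose_succ_right_eq]
  exact (Nat.add_one_mul_choose_eq n k).symm

private lemma abel_poly : ∀ (n : ℕ) (a : ℚ),
    ∑ k ∈ range (n + 1), C ((n.choose k : ℚ) * ((k:ℚ) + 1) ^ (k - 1)) *
      (X + C (a + ((n - k : ℕ) : ℚ))) ^ (n - k) = (X + C (a + n + 1)) ^ n := by
  intro n
  induction n with
  | zero => intro a; simp
  | succ n ih =>
    intro a
    set L := ∑ k ∈ range (n + 1 + 1), C (((n+1).choose k : ℚ) * ((k:ℚ) + 1) ^ (k - 1)) *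
      (X + C (a + ((n + 1 - k : ℕ) : ℚ))) ^ (n + 1 - k) with hL
    set R := (X + C (a + (n+1 : ℕ) + 1)) ^ (n+1) with hR
    have hderL : derivative L = C ((n:ℚ) + 1) * (X + C (a + (n:ℚ) + 2)) ^ n := by
      rw [hL, map_sum]
      have hterm : ∀ k ∈ range (n + 1 + 1),
          derivative (C (((n+1).choose k : ℚ) * ((k:ℚ) + 1) ^ (k - 1)) *
            (X + C (a + ((n + 1 - k : ℕ) : ℚ))) ^ (n + 1 - k))
          = C ((((n+1).choose k : ℚ) * ((n + 1 - k : ℕ) : ℚ)) * ((k:ℚ) + 1) ^ (k - 1)) *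
            (X + C (a + ((n + 1 - k : ℕ) : ℚ))) ^ (n - k) := by
        intro k _
        rw [derivative_mul, derivative_C, zero_mul, zero_add, derivative_pow]
        have : (X + C (a + ((n + 1 - k : ℕ) : ℚ))).derivative = 1 := by
          rw [derivative_add, derivative_X, derivative_C, add_zero]
        rw [this, mul_one]
        have : n + 1 - k - 1 = n - k := by omega
        rw [this]
        simp only [C_mul]
        ring
      rw [Finset.sum_congr rfl hterm, Finset.sum_range_succ]
      have hlast : C ((((n+1).choose (n+1) : ℚ) * ((n + 1 - (n+1) : ℕ) : ℚ)) *
          (((n+1:ℕ):ℚ) + 1) ^ (n + 1 - 1)) * (X + C (a + ((n + 1 - (n+1) : ℕ) : ℚ))) ^ (n - (n+1))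
          = 0 := by
        simp [Nat.sub_self]
      rw [hlast, add_zero]
      have hstep : ∀ k ∈ range (n + 1),
          C ((((n+1).choose k : ℚ) * ((n + 1 - k : ℕ) : ℚ)) * ((k:ℚ) + 1) ^ (k - 1)) *
            (X + C (a + ((n + 1 - k : ℕ) : ℚ))) ^ (n - k)
          = C ((n:ℚ) + 1) * (C ((n.choose k : ℚ) * ((k:ℚ) + 1) ^ (k - 1)) *
            (X + C ((a + 1) + ((n - k : ℕ) : ℚ))) ^ (n - k)) := by
        intro k hk
        have hkn : k ≤ n := by simpa using Nat.lt_succ_iff.mp (Finset.mem_range.mp hk)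
        have h1 : (((n+1).choose k : ℚ) * ((n + 1 - k : ℕ) : ℚ)) = ((n:ℚ) + 1) * (n.choose k : ℚ) := by
          have h1' := congrArg (fun x : ℕ => (x : ℚ)) (choose_id n k)
          push_cast at h1'
          linarith [h1']
        have h2 : a + ((n + 1 - k : ℕ) : ℚ) = (a + 1) + ((n - k : ℕ) : ℚ) := by
          have : n + 1 - k = (n - k) + 1 := by omega
          rw [this]
          push_cast
          ring
        rw [h1, h2]
        simp only [C_mul]
        ring
      rw [Finset.sum_congr rfl hstep, ← Finset.mul_sum, ih (a + 1)]
      congr 2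
      push_cast
      ring
    have hderR : derivative R = C ((n:ℚ) + 1) * (X + C (a + (n:ℚ) + 2)) ^ n := by
      rw [hR, derivative_pow]
      have : (X + C (a + ((n+1:ℕ):ℚ) + 1)).derivative = 1 := by
        rw [derivative_add, derivative_X, derivative_C, add_zero]
      rw [this, mul_one]
      have h2 : a + ((n+1:ℕ):ℚ) + 1 = a + (n:ℚ) + 2 := by push_cast; ring
      rw [h2]
      norm_num
    have hdiff : L - R = C ((L - R).coeff 0) := by
      apply eq_C_of_natDegree_eq_zero
      apply natDegree_eq_zero_of_derivative_eq_zero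
      rw [derivative_sub, hderL, hderR, sub_self]
    have hevalL : (L - R).eval (-(a + (n:ℚ) + 2)) = 0 := by
      rw [eval_sub]
      have hR0 : R.eval (-(a + (n:ℚ) + 2)) = 0 := by
        rw [hR, eval_pow, eval_add, eval_X, eval_C]
        have : -(a + (n:ℚ) + 2) + (a + ((n+1:ℕ):ℚ) + 1) = 0 := by push_cast; ring
        rw [this, zero_pow (by omega)]
      have hL0 : L.eval (-(a + (n:ℚ) + 2)) = 0 := by
        rw [hL, eval_finset_sum]
        have hterm : ∀ k ∈ range (n + 1 + 1),
            (C (((n+1).choose k : ℚ) * ((k:ℚ) + 1) ^ (k - 1)) *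
              (X + C (a + ((n + 1 - k : ℕ) : ℚ))) ^ (n + 1 - k)).eval (-(a + (n:ℚ) + 2))
            = (-1:ℚ) ^ (n + 1 - k) * ((n+1).choose k : ℚ) * ((k:ℚ) + 1) ^ n := by
          intro k hk
          have hkle : k ≤ n + 1 := Nat.lt_succ_iff.mp (Finset.mem_range.mp hk)
          rw [eval_mul, eval_C, eval_pow, eval_add, eval_X, eval_C]
          have hx : -(a + (n:ℚ) + 2) + (a + ((n + 1 - k : ℕ) : ℚ)) = -(((k:ℚ)) + 1) := by
            have : ((n + 1 - k : ℕ) : ℚ) = ((n:ℚ) + 1) - (k:ℚ) := by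
              push_cast [Nat.cast_sub (by omega : k ≤ n + 1)]
              ring
            rw [this]; ring
          rw [hx, neg_pow]
          have hpow : ((k:ℚ) + 1) ^ (k - 1) * ((k:ℚ) + 1) ^ (n + 1 - k) = ((k:ℚ) + 1) ^ n := by
            rw [← pow_add]
            rcases Nat.eq_zero_or_pos k with rfl | hkpos
            · norm_num
            · congr 1
              omega
          calc ((n+1).choose k : ℚ) * ((k:ℚ) + 1) ^ (k - 1) *
                ((-1:ℚ) ^ (n + 1 - k) * ((k:ℚ) + 1) ^ (n + 1 - k))
              = (-1:ℚ) ^ (n + 1 - k) * ((n+1).choose k : ℚ) *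
                (((k:ℚ) + 1) ^ (k - 1) * ((k:ℚ) + 1) ^ (n + 1 - k)) := by ring
            _ = _ := by rw [hpow]
        rw [Finset.sum_congr rfl hterm]
        have := alt_sum_zero (show n < n + 1 by omega)
        rw [← this]
      rw [hR0, hL0, sub_zero]
    have hC0 : (L - R).coeff 0 = 0 := by
      rw [hdiff] at hevalL
      simpa using hevalL
    have : L - R = 0 := by rw [hdiff, hC0, map_zero]
    exact sub_eq_zero.mp this

private lemma abel_num (n : ℕ) :
    ∑ k ∈ range (n + 1), (n.choose k : ℚ) * ((k:ℚ) + 1) ^ (k - 1) *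
      (((n - k : ℕ) : ℚ) + 1) ^ (n - k) = ((n:ℚ) + 2) ^ n := by
  have h := congrArg (Polynomial.eval (1:ℚ)) (abel_poly n 0)
  rw [eval_finset_sum] at h
  rw [eval_pow, eval_add, eval_X, eval_C] at h
  have h2 : (1:ℚ) + (0 + (n:ℚ) + 1) = (n:ℚ) + 2 := by ring
  rw [h2] at h
  rw [← h]
  apply Finset.sum_congr rfl
  intro k _
  rw [eval_mul, eval_C, eval_pow, eval_add, eval_X, eval_C]
  ring

private lemma abel_num' (n : ℕ) :
    ∑ j ∈ range (n + 1), (n.choose j : ℚ) * ((j:ℚ) + 1) ^ j *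
      (((n - j : ℕ) : ℚ) + 1) ^ ((n - j) - 1) = ((n:ℚ) + 2) ^ n := by
  rw [← abel_num n]
  rw [← Finset.sum_range_reflect]
  apply Finset.sum_congr rfl
  intro j hj
  have hj' : j ≤ n := Nat.lt_succ_iff.mp (Finset.mem_range.mp hj)
  have e1 : n + 1 - 1 - j = n - j := by omega
  have e2 : n - (n - j) = j := by omega
  rw [e1, Nat.choose_symm hj', e2]
  ring

private lemma term_eq (j l : ℕ) :
    (((j:ℚ) + 1) ^ j / j.factorial) * ((((l:ℚ) + 1)) ^ l / (l + 1).factorial)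
      = ((j + l).choose j : ℚ) * ((j:ℚ) + 1) ^ j * ((l:ℚ) + 1) ^ (l - 1) / (j + l).factorial := by
  have hpow : ((l:ℚ) + 1) ^ l = ((l:ℚ) + 1) ^ (l - 1) * ((l:ℚ) + 1) := by
    rcases Nat.eq_zero_or_pos l with rfl | hl
    · norm_num
    · rw [← pow_succ]
      congr 1
      omega
  have hfacnat := Nat.choose_mul_factorial_mul_factorial (Nat.le_add_right j l)
  rw [Nat.add_sub_cancel_left] at hfacnat
  have hfac : ((j + l).choose j : ℚ) * (j.factorial : ℚ) * (l.factorial : ℚ)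
      = ((j + l).factorial : ℚ) := by exact_mod_cast congrArg (fun x : ℕ => (x:ℚ)) hfacnat
  have hfs : ((l + 1).factorial : ℚ) = ((l:ℚ) + 1) * (l.factorial : ℚ) := by
    rw [Nat.factorial_succ]; push_cast; ring
  have h1 : (j.factorial : ℚ) ≠ 0 := Nat.cast_ne_zero.mpr (Nat.factorial_ne_zero j)
  have h2 : (l.factorial : ℚ) ≠ 0 := Nat.cast_ne_zero.mpr (Nat.factorial_ne_zero l)
  have h3 : ((j + l).factorial : ℚ) ≠ 0 := Nat.cast_ne_zero.mpr (Nat.factorial_ne_zero _)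
  have h4 : ((l:ℚ) + 1) ≠ 0 := by positivity
  rw [hpow, hfs]
  rw [← hfac]
  field_simp
  have hc : ((j + l).choose j : ℚ) ≠ 0 := Nat.cast_ne_zero.mpr (Nat.choose_pos (Nat.le_add_right j l)).ne'
  rw [div_self hc]

private lemma rec_sum (m : ℕ) :
    ∑ j ∈ range (m + 1), ((((j:ℚ) + 1) ^ j / j.factorial) *
      (((((m - j : ℕ)):ℚ) + 1) ^ (m - j) / ((m - j) + 1).factorial))
    = ((m:ℚ) + 1) * ((m:ℚ) + 2) ^ (m + 1) / (m + 2).factorial := by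
  have hterm : ∀ j ∈ range (m + 1),
      ((((j:ℚ) + 1) ^ j / j.factorial) *
        (((((m - j : ℕ)):ℚ) + 1) ^ (m - j) / ((m - j) + 1).factorial))
      = (m.choose j : ℚ) * ((j:ℚ) + 1) ^ j * (((m - j : ℕ):ℚ) + 1) ^ ((m - j) - 1)
        / m.factorial := by
    intro j hj
    have hj' : j ≤ m := Nat.lt_succ_iff.mp (Finset.mem_range.mp hj)
    have h := term_eq j (m - j)
    rw [Nat.add_sub_cancel' hj'] at h
    exact h
  rw [Finset.sum_congr rfl hterm, ← Finset.sum_div, abel_num' m]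
  have hf : ((m + 2).factorial : ℚ) = ((m:ℚ) + 2) * ((m:ℚ) + 1) * m.factorial := by
    rw [Nat.factorial_succ, Nat.factorial_succ]; push_cast; ring
  rw [hf]
  have h1 : (m.factorial : ℚ) ≠ 0 := Nat.cast_ne_zero.mpr (Nat.factorial_ne_zero m)
  have h2 : ((m:ℚ) + 2) ≠ 0 := by positivity
  have h3 : ((m:ℚ) + 1) ≠ 0 := by positivity
  field_simp
  ring

/-- The tree function `w = Σ_{n≥1} n^{n−1} T^n/n! ∈ ℚ⟦T⟧`. -/
noncomputable def treeFunction : PowerSeries ℚ :=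
  PowerSeries.mk fun n => if n = 0 then 0 else ((n : ℚ) ^ (n - 1)) / n.factorial

/-- Substitution of a power series `f` with zero constant term into the exponential
series `Σ_{k≥0} X^k/k!`: coefficientwise, `coeff n (exp f) = Σ_{k≤n} coeff n (f^k)/k!`
(the terms with `k > n` vanish since `f` has zero constant term). -/
noncomputable def expSubst (f : PowerSeries ℚ) : PowerSeries ℚ :=
  PowerSeries.mk fun n =>
    ∑ k ∈ Finset.range (n + 1), (k.factorial : ℚ)⁻¹ • PowerSeries.coeff (R := ℚ) n (f ^ k)

private lemma coeff_tree (n : ℕ) : PowerSeries.coeff (R := ℚ) n treeFunction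
    = if n = 0 then 0 else ((n : ℚ) ^ (n - 1)) / n.factorial := by
  rw [treeFunction, PowerSeries.coeff_mk]

private lemma const_tree : PowerSeries.constantCoeff (R := ℚ) treeFunction = 0 := by
  rw [← PowerSeries.coeff_zero_eq_constantCoeff_apply, coeff_tree]
  simp

private lemma coeff_pow_zero_of_lt {f : PowerSeries ℚ}
    (hf : PowerSeries.constantCoeff (R := ℚ) f = 0) {m k : ℕ} (h : m < k) :
    PowerSeries.coeff (R := ℚ) m (f ^ k) = 0 := by
  have hdvd : (PowerSeries.X : PowerSeries ℚ) ^ k ∣ f ^ k :=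
    pow_dvd_pow_of_dvd (PowerSeries.X_dvd_iff.mpr hf) k
  exact PowerSeries.X_pow_dvd_iff.mp hdvd m h

private lemma coeff_expSubst {f : PowerSeries ℚ} (hf : PowerSeries.constantCoeff (R := ℚ) f = 0)
    {m n : ℕ} (h : m ≤ n) :
    PowerSeries.coeff (R := ℚ) m (expSubst f)
      = ∑ k ∈ range (n + 1), (k.factorial : ℚ)⁻¹ * PowerSeries.coeff (R := ℚ) m (f ^ k) := by
  rw [expSubst, PowerSeries.coeff_mk]
  simp only [smul_eq_mul]
  apply Finset.sum_subset
  · intro x hx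
    simp only [Finset.mem_range] at hx ⊢
    omega
  · intro k hk hk2
    simp only [Finset.mem_range] at hk hk2
    have : m < k := by omega
    rw [coeff_pow_zero_of_lt hf this, mul_zero]

private lemma fac_inv_succ (k : ℕ) :
    (((k+1).factorial : ℚ))⁻¹ * ((k:ℚ) + 1) = ((k.factorial : ℚ))⁻¹ := by
  have h1 : (k.factorial : ℚ) ≠ 0 := Nat.cast_ne_zero.mpr (Nat.factorial_ne_zero k)
  have h2 : ((k:ℚ) + 1) ≠ 0 := by positivity
  rw [Nat.factorial_succ]
  push_cast
  field_simp

private lemma deriv_expSubst {f : PowerSeries ℚ} (hf : PowerSeries.constantCoeff (R := ℚ) f = 0) :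
    (PowerSeries.derivative ℚ) (expSubst f)
      = (PowerSeries.derivative ℚ) f * expSubst f := by
  ext n
  rw [PowerSeries.coeff_derivative, coeff_expSubst hf (le_refl (n+1)), Finset.sum_mul]
  have hL : ∀ k ∈ range (n + 2),
      (k.factorial : ℚ)⁻¹ * PowerSeries.coeff (R := ℚ) (n+1) (f ^ k) * ((n:ℚ) + 1)
      = (k.factorial : ℚ)⁻¹ * PowerSeries.coeff (R := ℚ) n ((PowerSeries.derivative ℚ) (f ^ k)) := by
    intro k _
    rw [PowerSeries.coeff_derivative]
    push_cast
    ring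
  rw [Finset.sum_congr rfl hL]
  have hD : ∀ k : ℕ, (PowerSeries.derivative ℚ) (f ^ k)
      = k • (f ^ (k - 1) * (PowerSeries.derivative ℚ) f) := by
    intro k
    rw [Derivation.leibniz_pow, smul_eq_mul]
  simp only [hD]
  rw [Finset.sum_range_succ']
  have h0 : (Nat.factorial 0 : ℚ)⁻¹ *
      PowerSeries.coeff (R := ℚ) n ((0:ℕ) • (f ^ (0 - 1) * (PowerSeries.derivative ℚ) f)) = 0 := by
    simp
  rw [h0, add_zero]
  have hL2 : ∀ k ∈ range (n + 1),
      ((k+1).factorial : ℚ)⁻¹ *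
        PowerSeries.coeff (R := ℚ) n ((k+1) • (f ^ (k + 1 - 1) * (PowerSeries.derivative ℚ) f))
      = (k.factorial : ℚ)⁻¹ * PowerSeries.coeff (R := ℚ) n (f ^ k * (PowerSeries.derivative ℚ) f) := by
    intro k _
    rw [map_nsmul]
    have : k + 1 - 1 = k := by omega
    rw [this, nsmul_eq_mul]
    rw [← fac_inv_succ k]
    push_cast
    ring
  rw [Finset.sum_congr rfl hL2]
  rw [PowerSeries.coeff_mul]
  have hR : ∀ p ∈ Finset.HasAntidiagonal.antidiagonal n,
      PowerSeries.coeff (R := ℚ) p.1 ((PowerSeries.derivative ℚ) f) *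
        PowerSeries.coeff (R := ℚ) p.2 (expSubst f)
      = ∑ k ∈ range (n + 1), (k.factorial : ℚ)⁻¹ *
          (PowerSeries.coeff (R := ℚ) p.1 ((PowerSeries.derivative ℚ) f) *
            PowerSeries.coeff (R := ℚ) p.2 (f ^ k)) := by
    intro p hp
    have hp2 : p.2 ≤ n := by
      have := Finset.HasAntidiagonal.mem_antidiagonal.mp hp
      omega
    rw [coeff_expSubst hf hp2, Finset.mul_sum]
    apply Finset.sum_congr rfl
    intro k _
    ring
  rw [Finset.sum_congr rfl hR, Finset.sum_comm]
  apply Finset.sum_congr rfl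
  intro k _
  rw [mul_comm (f ^ k) _, PowerSeries.coeff_mul, Finset.mul_sum]

private lemma coeff_dw (k : ℕ) :
    PowerSeries.coeff (R := ℚ) k ((PowerSeries.derivative ℚ) treeFunction)
      = ((k:ℚ) + 1) ^ k / k.factorial := by
  rw [PowerSeries.coeff_derivative, coeff_tree]
  have h1 : (k + 1 ≠ 0) := Nat.succ_ne_zero k
  rw [if_neg h1]
  have h2 : k + 1 - 1 = k := by omega
  rw [h2]
  have h3 : ((k+1).factorial : ℚ) = ((k:ℚ) + 1) * k.factorial := by
    rw [Nat.factorial_succ]; push_cast; ring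
  have h4 : (k.factorial : ℚ) ≠ 0 := Nat.cast_ne_zero.mpr (Nat.factorial_ne_zero k)
  have h5 : ((k:ℚ) + 1) ≠ 0 := by positivity
  rw [h3]
  push_cast
  field_simp

private lemma coeff_exp_tree : ∀ n : ℕ,
    PowerSeries.coeff (R := ℚ) n (expSubst treeFunction) = ((n:ℚ) + 1) ^ n / (n + 1).factorial := by
  intro n
  induction n using Nat.strong_induction_on with
  | _ n ih =>
    match n with
    | 0 =>
      rw [coeff_expSubst const_tree (le_refl 0)]
      simp
    | (m + 1) =>
      have hrec := congrArg (PowerSeries.coeff (R := ℚ) m) (deriv_expSubst const_tree)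
      rw [PowerSeries.coeff_derivative, PowerSeries.coeff_mul,
        Finset.Nat.sum_antidiagonal_eq_sum_range_succ_mk] at hrec
      have hterm : ∀ j ∈ range (m + 1),
          PowerSeries.coeff (R := ℚ) j ((PowerSeries.derivative ℚ) treeFunction) *
            PowerSeries.coeff (R := ℚ) (m - j) (expSubst treeFunction)
          = (((j:ℚ) + 1) ^ j / j.factorial) *
              (((((m - j : ℕ)):ℚ) + 1) ^ (m - j) / ((m - j) + 1).factorial) := by
        intro j hj
        rw [coeff_dw, ih (m - j) (by omega)]
      rw [Finset.sum_congr rfl hterm, rec_sum m] at hrec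
      have hm1 : ((m:ℚ) + 1) ≠ 0 := by positivity
      have key : PowerSeries.coeff (R := ℚ) (m+1) (expSubst treeFunction) * ((m:ℚ) + 1)
          = (((m:ℚ) + 2) ^ (m + 1) / (m + 2).factorial) * ((m:ℚ) + 1) := by
        rw [hrec]; ring
      have : PowerSeries.coeff (R := ℚ) (m+1) (expSubst treeFunction)
          = ((m:ℚ) + 2) ^ (m + 1) / (m + 2).factorial := mul_right_cancel₀ hm1 key
      rw [this]
      have : (m + 1 + 1) = m + 2 := by omega
      rw [this]
      push_cast
      ring_nf

/-- The tree function satisfies the functional equation `T·exp(w) = w` in `ℚ⟦T⟧`. -/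
theorem treeFunction_functional_equation :
    PowerSeries.X * expSubst treeFunction = treeFunction := by
  ext n
  cases n with
  | zero =>
    rw [PowerSeries.coeff_zero_eq_constantCoeff_apply, map_mul, PowerSeries.constantCoeff_X,
      zero_mul, coeff_tree]
    simp
  | succ n =>
    rw [PowerSeries.coeff_succ_X_mul, coeff_exp_tree n, coeff_tree]
    rw [if_neg (Nat.succ_ne_zero n)]
    have : n + 1 - 1 = n := by omega
    rw [this]
    push_cast
    ring
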